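/- Let α ∈ (0,1) and let X be an ℕ-valued random variable satisfying the recursive distributional equation. Then there exists ε > 0 such that for all s ∈ (0, ε), G(s) = Q₊(s) = (1/2)((2−p)s + p + √(((2−p)s + p)² − 4s·exp(α(s−1)))). -/

import Mathlib

open scoped ENNReal

/-- The Poisson(α) probability mass function on ℕ. -/
noncomputable def poissonPMF (α : ℝ) (k : ℕ) : ℝ≥0∞ :=
  ENNReal.ofReal (Real.exp (-α) * α ^ k / (Nat.factorial k))

/-- The Geometric(1/2) pmf: P(N = k) = (1/2)^(k+1) for k ≥ 0. -/
noncomputable def geomHalf (k : ℕ) : ℝ≥0∞ := (1 / 2) ^ (k + 1)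

/-- The law of (X - 1)⁺ when X has law μ on ℕ. -/
noncomputable def shiftLaw (μ : ℕ → ℝ≥0∞) (k : ℕ) : ℝ≥0∞ :=
  if k = 0 then μ 0 + μ 1 else μ (k + 1)

/-- Convolution of two (sub-)pmfs on ℕ: the law of an independent sum. -/
noncomputable def convAdd (f g : ℕ → ℝ≥0∞) (k : ℕ) : ℝ≥0∞ :=
  ∑ j ∈ Finset.range (k + 1), f j * g (k - j)

/-- n-fold convolution of a pmf on ℕ: the law of a sum of n i.i.d. copies. -/
noncomputable def iterConv (f : ℕ → ℝ≥0∞) : ℕ → ℕ → ℝ≥0∞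
  | 0 => fun k => if k = 0 then 1 else 0
  | n + 1 => convAdd (iterConv f n) f

/-- μ is the law of an ℕ-valued random variable X satisfying the RDE
    X =_d P + ∑_{i=1}^N (X_i - 1)⁺, with P ~ Poisson(α), N ~ Geom(1/2),
    X_i i.i.d. with law μ, all independent. -/
def SatisfiesRDE (α : ℝ) (μ : ℕ → ℝ≥0∞) : Prop :=
  (∑' k, μ k) = 1 ∧
  ∀ k, μ k = ∑' n, geomHalf n * convAdd (poissonPMF α) (iterConv (shiftLaw μ) n) k

/-- The probability generating function G(s) = E[s^X]. -/
noncomputable def pgf (μ : ℕ → ℝ≥0∞) (s : ℝ) : ℝ := ∑' k, (μ k).toReal * s ^ k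

/-- The mean E[X] = ∑ k · P(X = k), valued in [0,∞]. -/
noncomputable def meanENN (μ : ℕ → ℝ≥0∞) : ℝ≥0∞ := ∑' k : ℕ, (k : ℝ≥0∞) * μ k

noncomputable def genE (g : ℕ → ℝ≥0∞) (t : ℝ≥0∞) : ℝ≥0∞ := ∑' k, g k * t ^ k

lemma genE_le_tsum (g : ℕ → ℝ≥0∞) {t : ℝ≥0∞} (ht : t ≤ 1) :
    genE g t ≤ ∑' k, g k :=
  ENNReal.tsum_le_tsum fun k => mul_le_of_le_one_right' (pow_le_one' ht k)

lemma genE_conv (f g : ℕ → ℝ≥0∞) (t : ℝ≥0∞) :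
    genE (convAdd f g) t = genE f t * genE g t := by
  have key : ∀ k : ℕ, convAdd f g k * t ^ k
      = ∑' j : ℕ, (if j ≤ k then (f j * t ^ j) * (g (k - j) * t ^ (k - j)) else 0) := by
    intro k
    rw [convAdd, Finset.sum_mul,
      tsum_eq_sum (s := Finset.range (k + 1))
        (fun j hj => if_neg (by simpa [Nat.lt_succ_iff] using hj))]
    refine Finset.sum_congr rfl fun j hj => ?_
    rw [Finset.mem_range, Nat.lt_succ_iff] at hj
    rw [if_pos hj, show f j * t ^ j * (g (k - j) * t ^ (k - j))
        = f j * g (k - j) * (t ^ j * t ^ (k - j)) by ring, ← pow_add,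
      Nat.add_sub_cancel' hj]
  calc genE (convAdd f g) t
      = ∑' (k : ℕ) (j : ℕ), (if j ≤ k then (f j * t ^ j) * (g (k - j) * t ^ (k - j)) else 0) :=
        tsum_congr key
    _ = ∑' (j : ℕ) (k : ℕ), (if j ≤ k then (f j * t ^ j) * (g (k - j) * t ^ (k - j)) else 0) :=
        ENNReal.tsum_comm
    _ = ∑' (j : ℕ) (i : ℕ), (f j * t ^ j) * (g i * t ^ i) := by
        refine tsum_congr fun j => ?_
        have hsupp : Function.support
            (fun k => if j ≤ k then (f j * t ^ j) * (g (k - j) * t ^ (k - j)) else 0)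
            ⊆ Set.range (fun i => j + i) := by
          intro k hk
          by_cases hjk : j ≤ k
          · exact ⟨k - j, Nat.add_sub_cancel' hjk⟩
          · simp [Function.mem_support, if_neg hjk] at hk
        rw [← Function.Injective.tsum_eq (add_right_injective j) hsupp]
        exact tsum_congr fun i => by simp
    _ = genE f t * genE g t := by
        simp_rw [ENNReal.tsum_mul_left]
        rw [genE, genE, ENNReal.tsum_mul_right]

lemma genE_iter (f : ℕ → ℝ≥0∞) (t : ℝ≥0∞) (n : ℕ) :
    genE (iterConv f n) t = (genE f t) ^ n := by
  induction n with
  | zero =>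
      rw [genE, iterConv, tsum_eq_single 0 (fun b hb => by simp [hb])]
      simp
  | succ n ih => rw [iterConv, genE_conv, ih, pow_succ]

lemma real_exp_tsum (x : ℝ) : Real.exp x = ∑' n : ℕ, x ^ n / (Nat.factorial n) := by
  rw [Real.exp_eq_exp_ℝ, NormedSpace.exp_eq_tsum_div]

lemma genE_poisson {α s : ℝ} (hα : 0 ≤ α) (hs : 0 ≤ s) :
    genE (poissonPMF α) (ENNReal.ofReal s) = ENNReal.ofReal (Real.exp (α * (s - 1))) := by
  have hterm : ∀ k : ℕ, poissonPMF α k * ENNReal.ofReal s ^ k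
      = ENNReal.ofReal (Real.exp (-α) * ((α * s) ^ k / (Nat.factorial k))) := by
    intro k
    rw [poissonPMF, ← ENNReal.ofReal_pow hs, ← ENNReal.ofReal_mul (by positivity)]
    congr 1
    field_simp
    ring
  rw [genE]
  simp_rw [hterm]
  rw [← ENNReal.ofReal_tsum_of_nonneg (fun k => by positivity)
    ((Real.summable_pow_div_factorial (α * s)).mul_left _)]
  congr 1
  rw [tsum_mul_left, ← real_exp_tsum, ← Real.exp_add]
  ring_nf


lemma shiftLaw_tsum (μ : ℕ → ℝ≥0∞) (h : ∑' k, μ k = 1) : ∑' k, shiftLaw μ k = 1 := by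
  have h2 : (1 : ℝ≥0∞) = μ 0 + (μ 1 + ∑' k, μ (k + 2)) := by
    rw [← h, tsum_eq_zero_add' ENNReal.summable,
      tsum_eq_zero_add' (f := fun k => μ (k + 1)) ENNReal.summable]
  rw [tsum_eq_zero_add' ENNReal.summable]
  simp only [shiftLaw, if_pos, if_neg (Nat.succ_ne_zero _), reduceIte]
  rw [h2]
  ring

lemma genE_RDE (α : ℝ) (μ : ℕ → ℝ≥0∞) (hrec : ∀ k, μ k =
      ∑' n, geomHalf n * convAdd (poissonPMF α) (iterConv (shiftLaw μ) n) k)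
    (t : ℝ≥0∞) :
    genE μ t = genE (poissonPMF α) t * (1 / 2) *
      (1 - genE (shiftLaw μ) t * (1 / 2))⁻¹ := by
  set P := genE (poissonPMF α) t with hP
  set H := genE (shiftLaw μ) t with hH
  have h1 : genE μ t = ∑' n : ℕ, geomHalf n * (P * H ^ n) := by
    calc genE μ t
        = ∑' (k : ℕ) (n : ℕ), geomHalf n *
            (convAdd (poissonPMF α) (iterConv (shiftLaw μ) n) k * t ^ k) := by
          rw [genE]
          refine tsum_congr fun k => ?_
          rw [hrec k, ← ENNReal.tsum_mul_right]
          exact tsum_congr fun n => mul_assoc _ _ _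
      _ = ∑' (n : ℕ) (k : ℕ), geomHalf n *
            (convAdd (poissonPMF α) (iterConv (shiftLaw μ) n) k * t ^ k) :=
          ENNReal.tsum_comm
      _ = ∑' n : ℕ, geomHalf n * (P * H ^ n) := by
          refine tsum_congr fun n => ?_
          rw [ENNReal.tsum_mul_left, ← genE, genE_conv, genE_iter]
  rw [h1]
  have h2 : ∀ n : ℕ, geomHalf n * (P * H ^ n) = (P * (1 / 2)) * (H * (1 / 2)) ^ n := by
    intro n
    rw [geomHalf, mul_pow]
    ring
  simp_rw [h2]
  rw [ENNReal.tsum_mul_left, ENNReal.tsum_geometric]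

lemma genE_shift (μ : ℕ → ℝ≥0∞) (t : ℝ≥0∞) :
    t * genE (shiftLaw μ) t + μ 0 = μ 0 * t + genE μ t := by
  have hH : genE (shiftLaw μ) t = (μ 0 + μ 1) + ∑' k, μ (k + 2) * t ^ (k + 1) := by
    rw [genE, tsum_eq_zero_add' ENNReal.summable]
    simp only [shiftLaw, reduceIte, if_neg (Nat.succ_ne_zero _), pow_zero, mul_one]
  have hG : genE μ t = μ 0 + (μ 1 * t + ∑' k, μ (k + 2) * t ^ (k + 2)) := by
    rw [genE, tsum_eq_zero_add' ENNReal.summable, pow_zero, mul_one,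
      tsum_eq_zero_add' (f := fun k => μ (k + 1) * t ^ (k + 1)) ENNReal.summable, pow_one]
  have hmul : t * ∑' k, μ (k + 2) * t ^ (k + 1) = ∑' k, μ (k + 2) * t ^ (k + 2) := by
    rw [← ENNReal.tsum_mul_left]
    exact tsum_congr fun k => by ring
  rw [hH, hG, mul_add, hmul]
  ring


/-- For α ∈ (0,1), there exists ε > 0 such that G(s) = Q₊(s) for all
s ∈ (0, ε). -/
theorem pgf_eq_Qplus_near_zero
    (α : ℝ) (hα0 : 0 < α) (hα1 : α < 1)
    (μ : ℕ → ℝ≥0∞) (hμ : SatisfiesRDE α μ)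
    (p : ℝ) (hp : p = (μ 0).toReal) :
    ∃ ε > (0 : ℝ), ∀ s ∈ Set.Ioo (0 : ℝ) ε,
      pgf μ s = (1 / 2) * ((2 - p) * s + p +
        Real.sqrt (((2 - p) * s + p) ^ 2 - 4 * s * Real.exp (α * (s - 1)))) := by
  obtain ⟨htot, hrec⟩ := hμ
  have hμk_le : ∀ k, μ k ≤ 1 := fun k => htot ▸ ENNReal.le_tsum k
  have hμ0_ne_top : μ 0 ≠ ∞ := ((hμk_le 0).trans_lt ENNReal.one_lt_top).ne
  have hμ0_pos : 0 < μ 0 := by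
    have h0 : geomHalf 0 * convAdd (poissonPMF α) (iterConv (shiftLaw μ) 0) 0 ≤ μ 0 := by
      rw [hrec 0]; exact ENNReal.le_tsum 0
    refine lt_of_lt_of_le ?_ h0
    have hc : convAdd (poissonPMF α) (iterConv (shiftLaw μ) 0) 0 = poissonPMF α 0 := by
      simp [convAdd, iterConv]
    rw [hc, geomHalf]
    refine ENNReal.mul_pos (by norm_num) ?_
    rw [poissonPMF]
    simp only [pow_zero, mul_one, ne_eq]
    exact (ENNReal.ofReal_pos.mpr (by positivity)).ne'
  have hp_pos : 0 < p := hp ▸ ENNReal.toReal_pos hμ0_pos.ne' hμ0_ne_top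
  have hp_le : p ≤ 1 := by
    rw [hp]
    simpa using ENNReal.toReal_mono ENNReal.one_ne_top (hμk_le 0)
  have h2p : (0 : ℝ) < 2 - p := by linarith
  refine ⟨min (p / (2 - p)) 1, lt_min (div_pos hp_pos h2p) one_pos, ?_⟩
  rintro s ⟨hs0, hsε⟩
  have hs1 : s < 1 := lt_of_lt_of_le hsε (min_le_right _ _)
  have hsp : (2 - p) * s < p := by
    have := lt_of_lt_of_le hsε (min_le_left _ _)
    rw [lt_div_iff₀ h2p] at this
    linarith
  set t := ENNReal.ofReal s with ht_def
  have ht1 : t ≤ 1 := ENNReal.ofReal_le_one.mpr hs1.le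
  have hG_le : genE μ t ≤ 1 := htot ▸ genE_le_tsum μ ht1
  have hH_le : genE (shiftLaw μ) t ≤ 1 := (shiftLaw_tsum μ htot) ▸ genE_le_tsum _ ht1
  have hG_ne : genE μ t ≠ ∞ := (hG_le.trans_lt ENNReal.one_lt_top).ne
  have hH_ne : genE (shiftLaw μ) t ≠ ∞ := (hH_le.trans_lt ENNReal.one_lt_top).ne
  set g := (genE μ t).toReal with hg_def
  set h := (genE (shiftLaw μ) t).toReal with hh_def
  set e := Real.exp (α * (s - 1)) with he_def
  have hh1 : h ≤ 1 := by simpa [hh_def] using ENNReal.toReal_mono ENNReal.one_ne_top hH_le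
  have hh0 : 0 ≤ h := ENNReal.toReal_nonneg
  have hterm_ne : ∀ k : ℕ, μ k * t ^ k ≠ ∞ := fun k =>
    ENNReal.mul_ne_top ((hμk_le k).trans_lt ENNReal.one_lt_top).ne
      (ENNReal.pow_ne_top ENNReal.ofReal_ne_top)
  have hgsum : g = ∑' k, (μ k * t ^ k).toReal := by
    rw [hg_def, genE, ENNReal.tsum_toReal_eq hterm_ne]
  have hpgf : pgf μ s = g := by
    rw [hgsum, pgf]
    refine tsum_congr fun k => ?_
    rw [ENNReal.toReal_mul, ENNReal.toReal_pow, ht_def, ENNReal.toReal_ofReal hs0.le]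
  have hHhalf_le : genE (shiftLaw μ) t * (1 / 2) ≤ 1 :=
    le_trans (mul_le_of_le_one_right' (by norm_num)) hH_le
  have heq1 : g = e * (1 / 2) * (1 - h * (1 / 2))⁻¹ := by
    have hkey := genE_RDE α μ hrec t
    rw [ht_def, genE_poisson hα0.le hs0.le] at hkey
    have hsub : ((1 : ℝ≥0∞) - genE (shiftLaw μ) t * (1 / 2)).toReal = 1 - h * (1 / 2) := by
      rw [ENNReal.toReal_sub_of_le hHhalf_le ENNReal.one_ne_top, ENNReal.toReal_mul]
      norm_num
      exact hh_def.symm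
    calc g = (ENNReal.ofReal e * (1 / 2) *
          ((1 : ℝ≥0∞) - genE (shiftLaw μ) t * (1 / 2))⁻¹).toReal := by
          rw [hg_def, ht_def] at *
          rw [hkey]
      _ = e * (1 / 2) * (1 - h * (1 / 2))⁻¹ := by
          rw [ENNReal.toReal_mul, ENNReal.toReal_mul, ENNReal.toReal_inv, hsub,
            ENNReal.toReal_ofReal (Real.exp_pos _).le]
          norm_num
          exact Or.inl he_def.symm
  have hden_pos : (0 : ℝ) < 1 - h * (1 / 2) := by linarith
  have heq2 : g * (2 - h) = e := by
    have h2h : (2 : ℝ) - h ≠ 0 := by linarith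
    have hden_ne : (1 : ℝ) - h * (1 / 2) ≠ 0 := hden_pos.ne'
    rw [heq1]
    field_simp
  have hshift' : s * h + p = p * s + g := by
    have h1 := genE_shift μ t
    have e1 : (t * genE (shiftLaw μ) t + μ 0).toReal = s * h + p := by
      rw [ENNReal.toReal_add (ENNReal.mul_ne_top ENNReal.ofReal_ne_top hH_ne) hμ0_ne_top,
        ENNReal.toReal_mul, ht_def, ENNReal.toReal_ofReal hs0.le, hp, hh_def]
    have e2 : (μ 0 * t + genE μ t).toReal = p * s + g := by
      rw [ENNReal.toReal_add (ENNReal.mul_ne_top hμ0_ne_top ENNReal.ofReal_ne_top) hG_ne,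
        ENNReal.toReal_mul, ht_def, ENNReal.toReal_ofReal hs0.le, hp, hg_def]
    rw [← e1, ← e2, h1]
  have hg_ge_p : p ≤ g := by
    have hsumm : Summable fun k => (μ k * t ^ k).toReal :=
      ENNReal.summable_toReal (by rw [← genE]; exact hG_ne)
    have hle := Summable.le_tsum hsumm 0 fun j _ => ENNReal.toReal_nonneg
    simpa [hgsum, hp] using hle
  have hquad : ((2 - p) * s + p) * g - g ^ 2 = s * e := by
    linear_combination s * heq2 + g * hshift'
  have h2gB : 0 ≤ 2 * g - ((2 - p) * s + p) := by linarith
  have hB : ((2 - p) * s + p) ^ 2 - 4 * s * e = (2 * g - ((2 - p) * s + p)) ^ 2 := by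
    linear_combination 4 * hquad
  rw [hpgf, he_def] at *
  rw [hB, Real.sqrt_sq h2gB]
  ring
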